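/- There is an absolute constant K > 0 such that for every finite simple directed graph G=(V,E), every ρ ∈ (0,1] and every real C > 1, min-seed^{(1)}(G,ρ) ≤ K·C·ρ·|V| + |{v ∈ V : d^in(v) < (1/(Cρ))·ln(e/ρ)}| · ((1/(Cρ))·ln(e/ρ) + 1). -/

import Mathlib

/-- The in-neighborhood of `v` in the directed graph with edge relation `E`. -/
def inNbr {V : Type*} (E : V → V → Prop) (v : V) : Set V := {u | E u v}

/-- One round of the synchronous reversible cascade on a directed graph with edge
relation `E`: `dactive E ρ S k` is the set of active vertices in round `k`. -/
def dactive {V : Type*} (E : V → V → Prop) (ρ : ℝ) (S : Set V) : ℕ → Set V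
  | 0 => S
  | k + 1 =>
      {v | 0 < (inNbr E v).ncard ∧
        ρ * (inNbr E v).ncard ≤ ((inNbr E v ∩ dactive E ρ S k).ncard : ℝ)} ∪
      {v | v ∈ S ∧ (inNbr E v).ncard = 0}

/-- `dminSeed E ρ k` is the minimum number of seeds activating all vertices in round `k`. -/
noncomputable def dminSeed {V : Type*} (E : V → V → Prop) (ρ : ℝ) (k : ℕ) : ℕ :=
  sInf {m | ∃ S : Set V, S.ncard = m ∧ dactive E ρ S k = Set.univ}

open Finset
open scoped Classical

section Aux

variable {V : Type} [Fintype V] [DecidableEq V]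

lemma keyExp (p t : ℝ) (A : Finset V) :
    ∑ S ∈ (univ : Finset V).powerset,
      (p ^ S.card * (1 - p) ^ (univ \ S).card) * t ^ (A ∩ S).card
      = (p * t + (1 - p)) ^ A.card := by
  have h1 : ∀ S ∈ (univ : Finset V).powerset,
      (p ^ S.card * (1 - p) ^ (univ \ S).card) * t ^ (A ∩ S).card
      = (∏ i ∈ S, (if i ∈ A then p * t else p)) * ∏ i ∈ univ \ S, (1 - p) := by
    intro S _
    rw [Finset.prod_ite, Finset.prod_const, Finset.prod_const, Finset.prod_const,
      Finset.filter_mem_eq_inter, Finset.filter_not, Finset.filter_mem_eq_inter]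
    have hc : (S ∩ A).card + (S \ (S ∩ A)).card = S.card := by
      rw [Finset.card_sdiff_of_subset (Finset.inter_subset_left)]
      have : (S ∩ A).card ≤ S.card := Finset.card_le_card Finset.inter_subset_left
      omega
    rw [Finset.inter_comm A S, ← hc]
    ring
  rw [Finset.sum_congr rfl h1, ← Finset.prod_add]
  have h2 : ∀ i ∈ (univ : Finset V), (if i ∈ A then p * t else p) + (1 - p)
      = if i ∈ A then (p * t + (1 - p)) else 1 := by
    intro i _; split <;> ring
  rw [Finset.prod_congr rfl h2, Finset.prod_ite, Finset.prod_const, Finset.prod_const,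
    one_pow, mul_one, Finset.filter_mem_eq_inter, Finset.univ_inter]

lemma wsum_one (p : ℝ) :
    ∑ S ∈ (univ : Finset V).powerset, p ^ S.card * (1 - p) ^ (univ \ S).card = 1 := by
  have h := keyExp (V := V) p 0 ∅
  simpa using h

lemma wsum_mem (p : ℝ) (u : V) :
    ∑ S ∈ (univ : Finset V).powerset,
      (p ^ S.card * (1 - p) ^ (univ \ S).card) * (if u ∈ S then (1:ℝ) else 0) = p := by
  have h := keyExp (V := V) p 0 {u}
  have h2 : ∀ S ∈ (univ : Finset V).powerset,
      (p ^ S.card * (1 - p) ^ (univ \ S).card) * (0:ℝ) ^ ({u} ∩ S).card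
      = p ^ S.card * (1 - p) ^ (univ \ S).card
        - (p ^ S.card * (1 - p) ^ (univ \ S).card) * (if u ∈ S then (1:ℝ) else 0) := by
    intro S _
    by_cases hu : u ∈ S
    · rw [Finset.singleton_inter_of_mem hu]; simp [hu]
    · rw [Finset.singleton_inter_of_notMem hu]; simp [hu]
  rw [Finset.sum_congr rfl h2, Finset.sum_sub_distrib, wsum_one] at h
  have h4 : ((p * 0 + (1 - p)) : ℝ) ^ ({u} : Finset V).card = 1 - p := by norm_num
  rw [h4] at h
  linarith

lemma wsum_card (p : ℝ) :
    ∑ S ∈ (univ : Finset V).powerset,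
      (p ^ S.card * (1 - p) ^ (univ \ S).card) * S.card = p * Fintype.card V := by
  have h1 : ∀ S ∈ (univ : Finset V).powerset,
      (p ^ S.card * (1 - p) ^ (univ \ S).card) * S.card
      = ∑ u ∈ (univ : Finset V),
          (p ^ S.card * (1 - p) ^ (univ \ S).card) * (if u ∈ S then (1:ℝ) else 0) := by
    intro S _
    rw [← Finset.mul_sum]
    congr 1
    rw [Finset.sum_ite_mem, Finset.univ_inter, Finset.sum_const, nsmul_eq_mul, mul_one]
  rw [Finset.sum_congr rfl h1, Finset.sum_comm]
  rw [Finset.sum_congr rfl (fun u _ => wsum_mem p u), Finset.sum_const, nsmul_eq_mul, mul_comm,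
    Finset.card_univ]

lemma wsum_chernoff (p a : ℝ) (hp : 0 ≤ p) (hp1 : p ≤ 1) (A : Finset V) :
    ∑ S ∈ (univ : Finset V).powerset,
      (p ^ S.card * (1 - p) ^ (univ \ S).card) *
        (if ((A ∩ S).card : ℝ) < a then (1:ℝ) else 0)
      ≤ Real.exp a * (p * Real.exp (-1) + (1 - p)) ^ A.card := by
  have hkey := keyExp (V := V) p (Real.exp (-1)) A
  rw [← hkey, Finset.mul_sum]
  apply Finset.sum_le_sum
  intro S _
  have hw : 0 ≤ p ^ S.card * (1 - p) ^ (univ \ S).card :=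
    mul_nonneg (pow_nonneg hp _) (pow_nonneg (by linarith) _)
  split
  · rename_i hlt
    rw [mul_one]
    have hek : Real.exp (-1) ^ (A ∩ S).card = Real.exp (-((A ∩ S).card : ℝ)) := by
      rw [← Real.exp_nat_mul]; ring_nf
    have h1 : (1:ℝ) ≤ Real.exp a * Real.exp (-1) ^ (A ∩ S).card := by
      rw [hek, ← Real.exp_add]
      apply Real.one_le_exp
      linarith
    have h5 : Real.exp a * ((p ^ S.card * (1 - p) ^ (univ \ S).card) *
        Real.exp (-1) ^ (A ∩ S).card)
        = (p ^ S.card * (1 - p) ^ (univ \ S).card) *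
          (Real.exp a * Real.exp (-1) ^ (A ∩ S).card) := by ring
    rw [h5]
    exact le_mul_of_one_le_right hw h1
  · rw [mul_zero]
    positivity

lemma analytic (ρ C : ℝ) (d : ℕ) (hρ0 : 0 < ρ) (hρ1 : ρ ≤ 1) (hC : 1 < C)
    (hp1 : 6 * (C * ρ) < 1)
    (hTd : 1 / (C * ρ) * Real.log (Real.exp 1 / ρ) ≤ (d : ℝ)) :
    (ρ * d + 1) * (Real.exp (ρ * d) *
      (6 * (C * ρ) * Real.exp (-1) + (1 - 6 * (C * ρ))) ^ d) ≤ ρ := by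
  set x := C * ρ with hxdef
  have hx0 : 0 < x := by positivity
  have hd0 : (0:ℝ) ≤ (d:ℝ) := Nat.cast_nonneg d
  have hlogd : Real.log (Real.exp 1 / ρ) ≤ x * d := by
    have h := mul_le_mul_of_nonneg_left hTd (le_of_lt hx0)
    rw [← mul_assoc] at h
    rw [mul_one_div, div_self (ne_of_gt hx0), one_mul] at h
    linarith
  have hexpinv : Real.exp (-1) ≤ 1/2 := by
    rw [Real.exp_neg]
    rw [inv_le_comm₀ (Real.exp_pos 1) (by norm_num)]
    have := Real.exp_one_gt_d9
    linarith
  have hexpinv0 : 0 ≤ Real.exp (-1) := (Real.exp_pos _).le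
  have hy : 3 * x ≤ 6 * x * (1 - Real.exp (-1)) := by nlinarith
  have hbase1 : 6 * x * Real.exp (-1) + (1 - 6 * x) ≤ Real.exp (-(3 * x)) := by
    have h1 : (1:ℝ) - 6 * x * (1 - Real.exp (-1)) ≤ Real.exp (-(6 * x * (1 - Real.exp (-1)))) := by
      have := Real.add_one_le_exp (-(6 * x * (1 - Real.exp (-1))))
      linarith
    have h2 : Real.exp (-(6 * x * (1 - Real.exp (-1)))) ≤ Real.exp (-(3 * x)) := by
      apply Real.exp_le_exp.mpr; linarith
    nlinarith
  have hbase0 : 0 ≤ 6 * x * Real.exp (-1) + (1 - 6 * x) := by nlinarith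
  have hpow : (6 * x * Real.exp (-1) + (1 - 6 * x)) ^ d ≤ Real.exp (-(3 * x) * d) := by
    calc (6 * x * Real.exp (-1) + (1 - 6 * x)) ^ d ≤ (Real.exp (-(3 * x))) ^ d :=
          pow_le_pow_left₀ hbase0 hbase1 d
      _ = Real.exp (-(3 * x) * d) := by
          rw [← Real.exp_nat_mul]; ring_nf
  have h1 : ρ * d + 1 ≤ Real.exp (x * d) := by
    have : ρ * d ≤ x * d := by
      apply mul_le_mul_of_nonneg_right _ hd0
      nlinarith
    have h := Real.add_one_le_exp (x * d)
    linarith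
  have h2 : Real.exp (ρ * d) ≤ Real.exp (x * d) := by
    apply Real.exp_le_exp.mpr
    apply mul_le_mul_of_nonneg_right _ hd0
    nlinarith
  have hL : (ρ * d + 1) * (Real.exp (ρ * d) *
      (6 * x * Real.exp (-1) + (1 - 6 * x)) ^ d)
      ≤ Real.exp (x * d) * (Real.exp (x * d) * Real.exp (-(3 * x) * d)) := by
    apply mul_le_mul h1 _ (by positivity) (by positivity)
    apply mul_le_mul h2 hpow (by positivity) (by positivity)
  have hfin : Real.exp (x * d) * (Real.exp (x * d) * Real.exp (-(3 * x) * d))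
      = Real.exp (-(x * d)) := by
    rw [← Real.exp_add, ← Real.exp_add]; ring_nf
  rw [hfin] at hL
  have hlast : Real.exp (-(x * d)) ≤ ρ := by
    have h3 : Real.exp (-(x * d)) ≤ Real.exp (-Real.log (Real.exp 1 / ρ)) := by
      apply Real.exp_le_exp.mpr; linarith
    have h4 : Real.exp (-Real.log (Real.exp 1 / ρ)) = ρ / Real.exp 1 := by
      rw [Real.exp_neg, Real.exp_log (by positivity)]
      field_simp
    rw [h4] at h3
    have h5 : ρ / Real.exp 1 ≤ ρ := by
      rw [div_le_iff₀ (Real.exp_pos 1)]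
      nlinarith [Real.exp_one_gt_d9]
    linarith
  linarith

lemma construct (E : V → V → Prop) (ρ C : ℝ)
    (hρ0 : 0 < ρ) (hρ1 : ρ ≤ 1) (hC : 1 < C) (S₀ : Finset V) :
    (dminSeed E ρ 1 : ℝ) ≤
      (((S₀.card : ℝ) +
        ∑ v ∈ (univ : Finset V),
          (if 1 / (C * ρ) * Real.log (Real.exp 1 / ρ) ≤ ((inNbr E v).ncard : ℝ) ∧
              (((Set.toFinset (inNbr E v) ∩ S₀).card : ℝ) < ρ * ((inNbr E v).ncard : ℝ))
            then ρ * ((inNbr E v).ncard : ℝ) + 1 else 0)) +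
      ((Set.toFinset {v : V | ((inNbr E v).ncard : ℝ) <
          1 / (C * ρ) * Real.log (Real.exp 1 / ρ)}).card : ℝ) *
        (1 / (C * ρ) * Real.log (Real.exp 1 / ρ) + 1)) := by
  have hd : ∀ v : V, (inNbr E v).ncard = (Set.toFinset (inNbr E v)).card :=
    fun v => Set.ncard_eq_toFinset_card' _
  simp only [hd]
  set T : ℝ := 1 / (C * ρ) * Real.log (Real.exp 1 / ρ) with hTdef
  set N : V → Finset V := fun v => Set.toFinset (inNbr E v) with hNdef
  have hCρ : 0 < C * ρ := by positivity
  have hlog : 1 ≤ Real.log (Real.exp 1 / ρ) := by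
    rw [Real.log_div (Real.exp_ne_zero 1) (ne_of_gt hρ0), Real.log_exp]
    have : Real.log ρ ≤ 0 := Real.log_nonpos (le_of_lt hρ0) hρ1
    linarith
  have hT0 : 0 < T := by
    rw [hTdef]
    have h1 : 0 < 1 / (C * ρ) := by positivity
    nlinarith
  have hceil : ∀ v : V, ⌈ρ * (((N v).card : ℕ) : ℝ)⌉₊ ≤ (N v).card := by
    intro v
    rw [Nat.ceil_le]
    have : (0:ℝ) ≤ ((N v).card : ℝ) := Nat.cast_nonneg _
    nlinarith
  choose F hFsub hFcard using fun v => Finset.exists_subset_card_eq (hceil v)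
  set Low : Finset V := Set.toFinset {v : V | (((N v).card : ℕ) : ℝ) < T} with hLowdef
  have hLowmem : ∀ v : V, v ∈ Low ↔ (((N v).card : ℕ) : ℝ) < T := by
    intro v; rw [hLowdef, Set.mem_toFinset]; rfl
  set Bad : Finset V := univ.filter
    (fun v => T ≤ (((N v).card : ℕ) : ℝ) ∧ (((N v ∩ S₀).card : ℝ) < ρ * ((N v).card : ℝ)))
    with hBaddef
  set Zero : Finset V := Low.filter (fun v => (N v).card = 0) with hZerodef
  set Sfull : Finset V := (S₀ ∪ Bad.biUnion F) ∪ (Low.biUnion N ∪ Zero) with hSdef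
  have hNcoe : ∀ v : V, (↑(N v) : Set V) = inNbr E v := by
    intro v; rw [hNdef]; exact Set.coe_toFinset _
  have hcov : ∀ (v : V) (G : Finset V), (↑G : Set V) ⊆ inNbr E v → G ⊆ Sfull →
      ((G.card : ℕ) : ℝ) ≤ (((inNbr E v ∩ ↑Sfull).ncard : ℕ) : ℝ) := by
    intro v G h1 h2
    have hsub : (↑G : Set V) ⊆ inNbr E v ∩ ↑Sfull :=
      Set.subset_inter h1 (Finset.coe_subset.mpr h2)
    have := Set.ncard_le_ncard hsub (Set.toFinite _)
    rw [Set.ncard_coe_finset] at this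
    exact_mod_cast this
  have hact : dactive E ρ (↑Sfull) 1 = Set.univ := by
    apply Set.eq_univ_of_forall
    intro v
    show v ∈ dactive E ρ (↑Sfull) (0 + 1)
    simp only [dactive]
    by_cases h0 : (N v).card = 0
    · right
      refine ⟨?_, by rw [hd v]; exact h0⟩
      have hvz : v ∈ Zero := by
        rw [hZerodef, Finset.mem_filter]
        exact ⟨(hLowmem v).mpr (by rw [h0]; exact_mod_cast hT0), h0⟩
      have : v ∈ Sfull := by
        rw [hSdef]
        exact Finset.mem_union_right _ (Finset.mem_union_right _ hvz)
      exact_mod_cast this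
    · left
      refine ⟨by rw [hd v]; exact Nat.pos_of_ne_zero h0, ?_⟩
      rw [hd v]
      by_cases hlow : (((N v).card : ℕ) : ℝ) < T
      · have hvL : v ∈ Low := (hLowmem v).mpr hlow
        have hNsub : N v ⊆ Sfull := by
          rw [hSdef]
          exact (Finset.subset_biUnion_of_mem N hvL).trans
            ((Finset.subset_union_left).trans (Finset.subset_union_right))
        have := hcov v (N v) (by rw [hNcoe]) hNsub
        have hc : (0:ℝ) ≤ ((N v).card : ℝ) := Nat.cast_nonneg _
        nlinarith
      · push_neg at hlow
        by_cases hbad : ((N v ∩ S₀).card : ℝ) < ρ * ((N v).card : ℝ)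
        · have hvB : v ∈ Bad := by
            rw [hBaddef, Finset.mem_filter]
            exact ⟨Finset.mem_univ v, hlow, hbad⟩
          have hFs : F v ⊆ Sfull := by
            rw [hSdef]
            exact ((Finset.subset_biUnion_of_mem F hvB).trans
              (Finset.subset_union_right)).trans (Finset.subset_union_left)
          have h1 := hcov v (F v)
            (by rw [← hNcoe v]; exact Finset.coe_subset.mpr (hFsub v)) hFs
          have h2 : ρ * ((N v).card : ℝ) ≤ ((F v).card : ℝ) := by
            rw [hFcard v]
            exact Nat.le_ceil _
          linarith
        · push_neg at hbad
          have hsub : N v ∩ S₀ ⊆ Sfull := by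
            rw [hSdef]
            exact (Finset.inter_subset_right.trans Finset.subset_union_left).trans
              Finset.subset_union_left
          have h1 := hcov v (N v ∩ S₀)
            (by rw [← hNcoe v]; exact Finset.coe_subset.mpr Finset.inter_subset_left) hsub
          linarith
  have hmin : (dminSeed E ρ 1 : ℝ) ≤ ((Sfull.card : ℕ) : ℝ) := by
    have : dminSeed E ρ 1 ≤ Sfull.card :=
      Nat.sInf_le ⟨↑Sfull, Set.ncard_coe_finset _, hact⟩
    exact_mod_cast this
  have hsize : ((Sfull.card : ℕ) : ℝ) ≤
      ((S₀.card : ℝ) + ∑ v ∈ Bad, (ρ * ((N v).card : ℝ) + 1)) +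
      ((Low.card : ℝ) * (T + 1)) := by
    have hn1 : Sfull.card ≤ (S₀.card + ∑ v ∈ Bad, (F v).card)
        + (∑ v ∈ Low, (N v).card + Zero.card) := by
      calc Sfull.card ≤ (S₀ ∪ Bad.biUnion F).card + (Low.biUnion N ∪ Zero).card :=
            Finset.card_union_le _ _
        _ ≤ (S₀.card + (Bad.biUnion F).card) + ((Low.biUnion N).card + Zero.card) :=
            Nat.add_le_add (Finset.card_union_le _ _) (Finset.card_union_le _ _)
        _ ≤ _ := Nat.add_le_add
            (Nat.add_le_add_left (Finset.card_biUnion_le) _)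
            (Nat.add_le_add_right (Finset.card_biUnion_le) _)
    have hn1' : ((Sfull.card : ℕ) : ℝ) ≤ (S₀.card : ℝ) + ∑ v ∈ Bad, ((F v).card : ℝ)
        + (∑ v ∈ Low, ((N v).card : ℝ) + (Zero.card : ℝ)) := by
      push_cast
      exact_mod_cast Nat.cast_le.mpr hn1
    have hb : ∑ v ∈ Bad, ((F v).card : ℝ) ≤ ∑ v ∈ Bad, (ρ * ((N v).card : ℝ) + 1) := by
      apply Finset.sum_le_sum
      intro v _
      rw [hFcard v]
      have := Nat.ceil_lt_add_one (a := ρ * ((N v).card : ℝ)) (by positivity)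
      linarith
    have hz : ((Zero.card : ℕ) : ℝ) = ∑ v ∈ Low, (if (N v).card = 0 then (1:ℝ) else 0) := by
      rw [hZerodef, Finset.card_filter]
      push_cast
      rfl
    have hl : ∑ v ∈ Low, ((N v).card : ℝ) + (Zero.card : ℝ) ≤ (Low.card : ℝ) * (T + 1) := by
      rw [hz, ← Finset.sum_add_distrib]
      have : ∀ v ∈ Low, ((N v).card : ℝ) + (if (N v).card = 0 then (1:ℝ) else 0) ≤ T + 1 := by
        intro v hv
        have hvlt := (hLowmem v).mp hv
        by_cases h0 : (N v).card = 0
        · simp [h0]; linarith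
        · simp only [h0, if_false, add_zero]
          linarith
      calc ∑ v ∈ Low, (((N v).card : ℝ) + (if (N v).card = 0 then (1:ℝ) else 0))
          ≤ ∑ v ∈ Low, (T + 1) := Finset.sum_le_sum this
        _ = (Low.card : ℝ) * (T + 1) := by rw [Finset.sum_const, nsmul_eq_mul]
    linarith
  have hBsum : ∑ v ∈ Bad, (ρ * ((N v).card : ℝ) + 1) =
      ∑ v ∈ (univ : Finset V),
        (if T ≤ (((N v).card : ℕ) : ℝ) ∧ (((N v ∩ S₀).card : ℝ) < ρ * ((N v).card : ℝ))
          then ρ * ((N v).card : ℝ) + 1 else 0) := by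
    rw [hBaddef, Finset.sum_filter]
  rw [hBsum] at hsize
  calc (dminSeed E ρ 1 : ℝ) ≤ _ := hmin
    _ ≤ _ := hsize

lemma exists_S0 (E : V → V → Prop) (ρ C : ℝ)
    (hρ0 : 0 < ρ) (hρ1 : ρ ≤ 1) (hC : 1 < C) :
    ∃ S₀ : Finset V, ((S₀.card : ℝ) +
      ∑ v ∈ (univ : Finset V),
        (if 1 / (C * ρ) * Real.log (Real.exp 1 / ρ) ≤ ((inNbr E v).ncard : ℝ) ∧
            (((Set.toFinset (inNbr E v) ∩ S₀).card : ℝ) < ρ * ((inNbr E v).ncard : ℝ))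
          then ρ * ((inNbr E v).ncard : ℝ) + 1 else 0))
      ≤ 7 * C * ρ * (Fintype.card V) := by
  have hd : ∀ v : V, (inNbr E v).ncard = (Set.toFinset (inNbr E v)).card :=
    fun v => Set.ncard_eq_toFinset_card' _
  simp only [hd]
  set T : ℝ := 1 / (C * ρ) * Real.log (Real.exp 1 / ρ) with hTdef
  set N : V → Finset V := fun v => Set.toFinset (inNbr E v) with hNdef
  set n : ℕ := Fintype.card V with hndef
  have hn0 : (0:ℝ) ≤ (n:ℝ) := Nat.cast_nonneg n
  by_cases hcase : 1 ≤ 6 * (C * ρ)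
  · refine ⟨univ, ?_⟩
    have hz : ∀ v ∈ (univ : Finset V),
        (if T ≤ (((N v).card : ℕ) : ℝ) ∧
            (((N v ∩ univ).card : ℝ) < ρ * ((N v).card : ℝ))
          then ρ * ((N v).card : ℝ) + 1 else 0) = 0 := by
      intro v _
      rw [if_neg]
      rintro ⟨-, h2⟩
      rw [Finset.inter_univ] at h2
      have : (0:ℝ) ≤ ((N v).card : ℝ) := Nat.cast_nonneg _
      nlinarith
    rw [Finset.sum_congr rfl hz, Finset.sum_const, smul_zero, add_zero, Finset.card_univ]
    nlinarith
  · push_neg at hcase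
    set p : ℝ := 6 * (C * ρ) with hpdef
    have hp0 : 0 < p := by positivity
    have hp1 : p ≤ 1 := le_of_lt hcase
    set w : Finset V → ℝ := fun S => p ^ S.card * (1 - p) ^ (univ \ S).card with hwdef
    have hw0 : ∀ S : Finset V, 0 < w S := by
      intro S
      apply mul_pos (pow_pos hp0 _) (pow_pos (by linarith) _)
    set cost : Finset V → ℝ := fun S => (S.card : ℝ) +
      ∑ v ∈ (univ : Finset V),
        (if T ≤ (((N v).card : ℕ) : ℝ) ∧
            (((N v ∩ S).card : ℝ) < ρ * ((N v).card : ℝ))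
          then ρ * ((N v).card : ℝ) + 1 else 0) with hcostdef
    have hper : ∀ v : V, ∑ S ∈ (univ : Finset V).powerset,
        w S * (if T ≤ (((N v).card : ℕ) : ℝ) ∧
            (((N v ∩ S).card : ℝ) < ρ * ((N v).card : ℝ))
          then ρ * ((N v).card : ℝ) + 1 else 0) ≤ ρ := by
      intro v
      by_cases hTd : T ≤ (((N v).card : ℕ) : ℝ)
      · have hit : ∀ S : Finset V,
            (if T ≤ (((N v).card : ℕ) : ℝ) ∧
                (((N v ∩ S).card : ℝ) < ρ * ((N v).card : ℝ))
              then ρ * ((N v).card : ℝ) + 1 else 0)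
            = (ρ * ((N v).card : ℝ) + 1) *
              (if (((N v ∩ S).card : ℝ) < ρ * ((N v).card : ℝ)) then (1:ℝ) else 0) := by
          intro S
          by_cases h : ((N v ∩ S).card : ℝ) < ρ * ((N v).card : ℝ) <;> simp [h, hTd]
        have hre : ∑ S ∈ (univ : Finset V).powerset,
            w S * (if T ≤ (((N v).card : ℕ) : ℝ) ∧
                (((N v ∩ S).card : ℝ) < ρ * ((N v).card : ℝ))
              then ρ * ((N v).card : ℝ) + 1 else 0)
            = (ρ * ((N v).card : ℝ) + 1) * ∑ S ∈ (univ : Finset V).powerset,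
                w S * (if (((N v ∩ S).card : ℝ) < ρ * ((N v).card : ℝ)) then (1:ℝ) else 0) := by
          rw [Finset.mul_sum]
          apply Finset.sum_congr rfl
          intro S _
          rw [hit S]; ring
        rw [hre]
        have hch := wsum_chernoff (V := V) p (ρ * ((N v).card : ℝ)) (le_of_lt hp0) hp1 (N v)
        have hcp : 0 ≤ ρ * ((N v).card : ℝ) + 1 := by positivity
        calc (ρ * ((N v).card : ℝ) + 1) * ∑ S ∈ (univ : Finset V).powerset,
                w S * (if (((N v ∩ S).card : ℝ) < ρ * ((N v).card : ℝ)) then (1:ℝ) else 0)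
            ≤ (ρ * ((N v).card : ℝ) + 1) *
              (Real.exp (ρ * ((N v).card : ℝ)) *
                (p * Real.exp (-1) + (1 - p)) ^ (N v).card) := by
              apply mul_le_mul_of_nonneg_left _ hcp
              exact hch
          _ ≤ ρ := by
              have := analytic ρ C ((N v).card) hρ0 hρ1 hC hcase hTd
              rw [hpdef]
              exact this
      · have hz : ∀ S ∈ (univ : Finset V).powerset,
            w S * (if T ≤ (((N v).card : ℕ) : ℝ) ∧
                (((N v ∩ S).card : ℝ) < ρ * ((N v).card : ℝ))
              then ρ * ((N v).card : ℝ) + 1 else 0) = 0 := by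
          intro S _
          rw [if_neg (fun h => hTd h.1), mul_zero]
        rw [Finset.sum_congr rfl hz, Finset.sum_const, smul_zero]
        exact le_of_lt hρ0
    have hE : ∑ S ∈ (univ : Finset V).powerset, w S * cost S ≤ 7 * C * ρ * n := by
      have hexp : ∑ S ∈ (univ : Finset V).powerset, w S * cost S
          = (∑ S ∈ (univ : Finset V).powerset, w S * S.card)
            + ∑ v ∈ (univ : Finset V), (∑ S ∈ (univ : Finset V).powerset,
                w S * (if T ≤ (((N v).card : ℕ) : ℝ) ∧
                    (((N v ∩ S).card : ℝ) < ρ * ((N v).card : ℝ))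
                  then ρ * ((N v).card : ℝ) + 1 else 0)) := by
        have hterm : ∀ S ∈ (univ : Finset V).powerset, w S * cost S
            = w S * S.card + ∑ v ∈ (univ : Finset V),
                w S * (if T ≤ (((N v).card : ℕ) : ℝ) ∧
                    (((N v ∩ S).card : ℝ) < ρ * ((N v).card : ℝ))
                  then ρ * ((N v).card : ℝ) + 1 else 0) := by
          intro S _
          rw [hcostdef]
          rw [mul_add, Finset.mul_sum]
        rw [Finset.sum_congr rfl hterm, Finset.sum_add_distrib]
        congr 1
        exact Finset.sum_comm
      rw [hexp]
      have h1 : ∑ S ∈ (univ : Finset V).powerset, w S * S.card = p * n := wsum_card p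
      have h2 : ∑ v ∈ (univ : Finset V), (∑ S ∈ (univ : Finset V).powerset,
            w S * (if T ≤ (((N v).card : ℕ) : ℝ) ∧
                (((N v ∩ S).card : ℝ) < ρ * ((N v).card : ℝ))
              then ρ * ((N v).card : ℝ) + 1 else 0)) ≤ ρ * n := by
        calc _ ≤ ∑ _v ∈ (univ : Finset V), ρ := Finset.sum_le_sum (fun v _ => hper v)
          _ = ρ * n := by rw [Finset.sum_const, nsmul_eq_mul, Finset.card_univ, mul_comm]
      rw [h1]
      have hCn : 0 ≤ (C - 1) * (ρ * n) := mul_nonneg (by linarith) (by positivity)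
      have : p * n + ρ * n ≤ 7 * C * ρ * n := by
        rw [hpdef]
        nlinarith [hCn]
      linarith [h2]
    have hRHS : ∑ S ∈ (univ : Finset V).powerset, w S * (7 * C * ρ * n) = 7 * C * ρ * n := by
      rw [← Finset.sum_mul]
      rw [hwdef]
      rw [wsum_one, one_mul]
    obtain ⟨S₀, -, hS₀⟩ := Finset.exists_le_of_sum_le
      (⟨∅, Finset.empty_mem_powerset _⟩ : ((univ : Finset V).powerset).Nonempty)
      (le_of_le_of_eq hE hRHS.symm)
    refine ⟨S₀, ?_⟩
    have := (mul_le_mul_iff_right₀ (hw0 S₀)).mp hS₀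
    rw [hcostdef] at this
    exact this

end Aux

theorem stmt_8 :
    ∃ K : ℝ, 0 < K ∧
      ∀ (V : Type) [Fintype V] (E : V → V → Prop), Irreflexive E →
        ∀ ρ : ℝ, 0 < ρ → ρ ≤ 1 → ∀ C : ℝ, 1 < C →
          (dminSeed E ρ 1 : ℝ) ≤ K * C * ρ * (Fintype.card V) +
            (({v : V | ((inNbr E v).ncard : ℝ) <
                1 / (C * ρ) * Real.log (Real.exp 1 / ρ)} : Set V).ncard : ℝ) *
              (1 / (C * ρ) * Real.log (Real.exp 1 / ρ) + 1) := by
  refine ⟨7, by norm_num, ?_⟩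
  intro V _ E _ ρ hρ0 hρ1 C hC
  classical
  obtain ⟨S₀, hS₀⟩ := exists_S0 E ρ C hρ0 hρ1 hC
  have hcon := construct E ρ C hρ0 hρ1 hC S₀
  have hA : (({v : V | ((inNbr E v).ncard : ℝ) <
      1 / (C * ρ) * Real.log (Real.exp 1 / ρ)} : Set V).ncard : ℝ)
      = ((Set.toFinset {v : V | ((inNbr E v).ncard : ℝ) <
          1 / (C * ρ) * Real.log (Real.exp 1 / ρ)}).card : ℝ) := by
    rw [Set.ncard_eq_toFinset_card']
  rw [hA]
  linarith
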